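/- arXiv:2311.15754 — 2 statements merged into one kernel-verified Lean document; each statement's English description precedes it below -/
import Mathlib

section
/- Let A be a commutative ring, M an A-module, and k ≥ 0. Let V_k ⊆ A ⊗_ℤ M be the subgroup generated by all elements δ_{f₁}∘⋯∘δ_{f_{k+1}}(g ⊗ m) with f_i, g ∈ A, m ∈ M, and let J^k(M) := (A ⊗_ℤ M)/V_k with the induced A-module structure from ▷, and j^k : M → J^k(M) the map m ↦ [1 ⊗ m]. Then for every differential operator D : M → N of order ≤ k (N an A-module), there exists a unique A-linear map ĵ[D] : J^k(M) → N with D = ĵ[D] ∘ j^k; explicitly ĵ[D]([f ⊗ m]) = f • D(m). Conversely, for every A-linear F : J^k(M) → N, the composite F ∘ j^k is a differential operator of order ≤ k. -/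
open scoped TensorProduct

/-- The action `f ▷ (g ⊗ m) = (f·g) ⊗ m` on `A ⊗_ℤ M`, as an additive endomorphism. -/
noncomputable def Ltri (A : Type*) [CommRing A] (M : Type*) [AddCommGroup M] [Module A M]
    (f : A) : Module.End ℤ (A ⊗[ℤ] M) :=
  TensorProduct.map ((DistribMulAction.toAddMonoidHom A f).toIntLinearMap) LinearMap.id

/-- The action `f ▶ (g ⊗ m) = g ⊗ (f • m)` on `A ⊗_ℤ M`, as an additive endomorphism. -/
noncomputable def Lbl (A : Type*) [CommRing A] (M : Type*) [AddCommGroup M] [Module A M]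
    (f : A) : Module.End ℤ (A ⊗[ℤ] M) :=
  TensorProduct.map LinearMap.id ((DistribMulAction.toAddMonoidHom M f).toIntLinearMap)

/-- `δ_f := L^▷_f − L^▶_f`, so `δ_f (g ⊗ m) = (f·g) ⊗ m − g ⊗ (f • m)`. -/
noncomputable def delta (A : Type*) [CommRing A] (M : Type*) [AddCommGroup M] [Module A M]
    (f : A) : Module.End ℤ (A ⊗[ℤ] M) :=
  Ltri A M f - Lbl A M f

/-- Iterated operator `δ_{f₁} ∘ ⋯ ∘ δ_{f_j}` for a list `(f₁, …, f_j)`. -/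
noncomputable def iterDelta (A : Type*) [CommRing A] (M : Type*) [AddCommGroup M]
    [Module A M] : List A → Module.End ℤ (A ⊗[ℤ] M)
  | [] => 1
  | f :: fs => delta A M f * iterDelta A M fs

/-- The submodule `V_k ⊆ A ⊗_ℤ M` generated (under the `▷` action) by all elements
`δ_{f₁}∘⋯∘δ_{f_{k+1}}(g ⊗ m)`. -/
noncomputable def Vk (A : Type*) [CommRing A] (M : Type*) [AddCommGroup M] [Module A M]
    (k : ℕ) : Submodule A (A ⊗[ℤ] M) :=
  Submodule.span A {x | ∃ (l : List A) (g : A) (m : M),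
    l.length = k + 1 ∧ x = iterDelta A M l (g ⊗ₜ[ℤ] m)}

/-- The jet prolongation `j^k : M → J^k(M) = (A ⊗_ℤ M)/V_k`, `m ↦ [1 ⊗ m]`. -/
noncomputable def jetProl (A : Type*) [CommRing A] (M : Type*) [AddCommGroup M] [Module A M]
    (k : ℕ) (m : M) : (A ⊗[ℤ] M) ⧸ Vk A M k :=
  Submodule.Quotient.mk ((1 : A) ⊗ₜ[ℤ] m)

/-- Multiplication by `f : A` as an additive (`ℤ`-linear) endomorphism of `M`. -/
def lam (A : Type*) [CommRing A] (M : Type*) [AddCommGroup M] [Module A M] (f : A) :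
    Module.End ℤ M :=
  (DistribMulAction.toAddMonoidHom M f).toIntLinearMap

/-- Differential operators of order `≤ k` from the `A`-module `M` to the `A`-module `N`,
defined inductively: order `≤ 0` means `A`-linear, and `D` has order `≤ k + 1` iff
`D ∘ λ^M_f − λ^N_f ∘ D` has order `≤ k` for every `f : A`. -/
def IsDiffOp2 (A : Type*) [CommRing A] {M N : Type*} [AddCommGroup M] [Module A M]
    [AddCommGroup N] [Module A N] : ℕ → (M →ₗ[ℤ] N) → Prop
  | 0 => fun D => ∀ (f : A) (m : M), D (f • m) = f • D m
  | k + 1 => fun D => ∀ f : A, IsDiffOp2 A k (D ∘ₗ lam A M f - lam A N f ∘ₗ D)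

section Aux

set_option linter.unusedSectionVars false

variable (A : Type*) [CommRing A] (M : Type*) [AddCommGroup M] [Module A M]
    (N : Type*) [AddCommGroup N] [Module A N]

@[simp] lemma lam_apply (f : A) (m : M) : lam A M f m = f • m := rfl

@[simp] lemma delta_tmul (f g : A) (m : M) :
    delta A M f (g ⊗ₜ[ℤ] m) = (f * g) ⊗ₜ[ℤ] m - g ⊗ₜ[ℤ] (f • m) := by
  show Ltri A M f (g ⊗ₜ[ℤ] m) - Lbl A M f (g ⊗ₜ[ℤ] m) = _
  rfl

lemma delta_smul (f a : A) (x : A ⊗[ℤ] M) : delta A M f (a • x) = a • delta A M f x := by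
  induction x using TensorProduct.induction_on with
  | zero => simp
  | tmul g m => simp [TensorProduct.smul_tmul', smul_eq_mul, smul_sub, mul_left_comm]
  | add x y hx hy => simp [smul_add, map_add, hx, hy]

/-- `delta` as an `A`-linear map for the `▷`-module structure. -/
noncomputable def deltaA (f : A) : (A ⊗[ℤ] M) →ₗ[A] (A ⊗[ℤ] M) where
  toFun := delta A M f
  map_add' := map_add _
  map_smul' := fun a x => delta_smul A M f a x

@[simp] lemma deltaA_apply (f : A) (x : A ⊗[ℤ] M) : deltaA A M f x = delta A M f x := rfl

/-- `Phi D : A ⊗[ℤ] M →ₗ[A] N`, `f ⊗ m ↦ f • D m`. -/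
noncomputable def Phi (D : M →ₗ[ℤ] N) : (A ⊗[ℤ] M) →ₗ[A] N :=
  TensorProduct.AlgebraTensorModule.lift (LinearMap.toSpanSingleton A (M →ₗ[ℤ] N) D)

@[simp] lemma Phi_tmul (D : M →ₗ[ℤ] N) (f : A) (m : M) :
    Phi A M N D (f ⊗ₜ[ℤ] m) = f • D m := rfl

lemma Phi_zero (x : A ⊗[ℤ] M) : Phi A M N 0 x = 0 := by
  induction x using TensorProduct.induction_on with
  | zero => simp
  | tmul g m => simp
  | add x y hx hy => simp [map_add, hx, hy]

lemma Phi_delta (D : M →ₗ[ℤ] N) (f : A) (x : A ⊗[ℤ] M) :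
    Phi A M N D (delta A M f x) = - Phi A M N (D ∘ₗ lam A M f - lam A N f ∘ₗ D) x := by
  induction x using TensorProduct.induction_on with
  | zero => simp
  | tmul g m =>
      simp only [delta_tmul, map_sub, Phi_tmul, LinearMap.sub_apply, LinearMap.comp_apply,
        lam_apply]
      rw [smul_sub, mul_comm, mul_smul]
      abel
  | add x y hx hy => simp only [map_add, hx, hy]; abel

lemma iterDelta_cons (f : A) (fs : List A) (x : A ⊗[ℤ] M) :
    iterDelta A M (f :: fs) x = delta A M f (iterDelta A M fs x) := rfl

lemma Phi_iterDelta_eq_zero : ∀ (k : ℕ) (D : M →ₗ[ℤ] N), IsDiffOp2 A k D →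
    ∀ (l : List A), l.length = k + 1 → ∀ x : A ⊗[ℤ] M,
      Phi A M N D (iterDelta A M l x) = 0 := by
  intro k
  induction k with
  | zero =>
      intro D hD l hl x
      match l, hl with
      | [f], _ =>
        have h0 : D ∘ₗ lam A M f - lam A N f ∘ₗ D = 0 := by
          apply LinearMap.ext; intro m
          simp [hD f m]
        rw [iterDelta_cons]
        have : iterDelta A M ([] : List A) x = x := rfl
        rw [this, Phi_delta, h0, Phi_zero, neg_zero]
  | succ k ih =>
      intro D hD l hl x
      match l, hl with
      | f :: fs, hl =>
        have hfs : fs.length = k + 1 := by simpa using hl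
        rw [iterDelta_cons, Phi_delta, ih _ (hD f) fs hfs, neg_zero]

lemma isDiffOp_of_vanish : ∀ (k : ℕ) (G : (A ⊗[ℤ] M) →ₗ[A] N),
    (∀ (l : List A) (g : A) (m : M), l.length = k + 1 →
        G (iterDelta A M l (g ⊗ₜ[ℤ] m)) = 0) →
    IsDiffOp2 A k ((G.restrictScalars ℤ) ∘ₗ TensorProduct.mk ℤ A M 1) := by
  intro k
  induction k with
  | zero =>
      intro G hG
      show ∀ (f : A) (m : M), _
      intro f m
      have h := hG [f] 1 m rfl
      rw [iterDelta_cons] at h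
      have h1 : iterDelta A M ([] : List A) ((1 : A) ⊗ₜ[ℤ] m) = (1 : A) ⊗ₜ[ℤ] m := rfl
      rw [h1, delta_tmul, mul_one, map_sub, sub_eq_zero] at h
      have h2 : (f : A) ⊗ₜ[ℤ] m = f • ((1 : A) ⊗ₜ[ℤ] m) := by
        rw [TensorProduct.smul_tmul', smul_eq_mul, mul_one]
      change G ((1:A) ⊗ₜ[ℤ] (f • m)) = f • G ((1:A) ⊗ₜ[ℤ] m)
      rw [← h, h2, map_smul]
  | succ k ih =>
      intro G hG
      show ∀ f : A, _
      intro f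
      have key : ((G.restrictScalars ℤ) ∘ₗ TensorProduct.mk ℤ A M 1) ∘ₗ lam A M f -
          lam A N f ∘ₗ ((G.restrictScalars ℤ) ∘ₗ TensorProduct.mk ℤ A M 1) =
          (((-(G ∘ₗ deltaA A M f)).restrictScalars ℤ) ∘ₗ TensorProduct.mk ℤ A M 1) := by
        apply LinearMap.ext; intro m
        change G ((1:A) ⊗ₜ[ℤ] (f • m)) - f • G ((1:A) ⊗ₜ[ℤ] m) =
          -(G (delta A M f ((1:A) ⊗ₜ[ℤ] m)))
        simp only [LinearMap.sub_apply, LinearMap.comp_apply, LinearMap.restrictScalars_apply,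
          TensorProduct.mk_apply, lam_apply, LinearMap.neg_apply, deltaA_apply, delta_tmul,
          mul_one, map_sub, map_neg]
        have h2 : (f : A) ⊗ₜ[ℤ] m = f • ((1 : A) ⊗ₜ[ℤ] m) := by
          rw [TensorProduct.smul_tmul', smul_eq_mul, mul_one]
        rw [h2, map_smul]
        abel
      rw [key]
      apply ih
      intro l g m hl
      have := hG (f :: l) g m (by simp [hl])
      rw [iterDelta_cons] at this
      simp only [LinearMap.neg_apply, LinearMap.comp_apply, deltaA_apply, this, neg_zero]

end Aux

/-- Universal property of the `k`-th jet module: every differential operator `D : M → N`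
of order `≤ k` factors uniquely through `j^k` via an `A`-linear map `ĵ[D] : J^k(M) → N`,
explicitly given by `ĵ[D]([f ⊗ m]) = f • D(m)`; conversely, for every `A`-linear
`F : J^k(M) → N` the composite `F ∘ j^k` is a differential operator of order `≤ k`. -/
theorem jet_universal_property (A : Type*) [CommRing A] (M : Type*) [AddCommGroup M]
    [Module A M] (N : Type*) [AddCommGroup N] [Module A N] (k : ℕ) :
    (∀ D : M →ₗ[ℤ] N, IsDiffOp2 A k D →
      ∃! F : ((A ⊗[ℤ] M) ⧸ Vk A M k) →ₗ[A] N, ∀ m : M, F (jetProl A M k m) = D m) ∧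
    (∀ (D : M →ₗ[ℤ] N), IsDiffOp2 A k D →
      ∀ F : ((A ⊗[ℤ] M) ⧸ Vk A M k) →ₗ[A] N, (∀ m : M, F (jetProl A M k m) = D m) →
        ∀ (f : A) (m : M), F (Submodule.Quotient.mk (f ⊗ₜ[ℤ] m)) = f • D m) ∧
    (∀ F : ((A ⊗[ℤ] M) ⧸ Vk A M k) →ₗ[A] N,
      ∃ D₀ : M →ₗ[ℤ] N, (∀ m : M, D₀ m = F (jetProl A M k m)) ∧ IsDiffOp2 A k D₀) := by
  -- the key computation for any factorization
  have part2 : ∀ (D : M →ₗ[ℤ] N), (∀ F : ((A ⊗[ℤ] M) ⧸ Vk A M k) →ₗ[A] N,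
      (∀ m : M, F (jetProl A M k m) = D m) →
        ∀ (f : A) (m : M), F (Submodule.Quotient.mk (f ⊗ₜ[ℤ] m)) = f • D m) := by
    intro D F hF f m
    have h2 : (f : A) ⊗ₜ[ℤ] m = f • ((1 : A) ⊗ₜ[ℤ] m) := by
      rw [TensorProduct.smul_tmul', smul_eq_mul, mul_one]
    rw [h2, Submodule.Quotient.mk_smul, map_smul]
    have : (Submodule.Quotient.mk ((1 : A) ⊗ₜ[ℤ] m) : (A ⊗[ℤ] M) ⧸ Vk A M k) =
        jetProl A M k m := rfl
    rw [this, hF]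
  refine ⟨?_, fun D _ => part2 D, ?_⟩
  · intro D hD
    have hle : Vk A M k ≤ LinearMap.ker (Phi A M N D) := by
      rw [Vk, Submodule.span_le]
      rintro x ⟨l, g, m, hl, rfl⟩
      exact LinearMap.mem_ker.2 (Phi_iterDelta_eq_zero A M N k D hD l hl _)
    refine ⟨(Vk A M k).liftQ (Phi A M N D) hle, fun m => ?_, ?_⟩
    · show Phi A M N D ((1 : A) ⊗ₜ[ℤ] m) = D m
      rw [Phi_tmul, one_smul]
    · intro F' hF'
      apply LinearMap.ext
      intro q
      obtain ⟨x, rfl⟩ := Submodule.Quotient.mk_surjective _ q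
      induction x using TensorProduct.induction_on with
      | zero => simp
      | tmul f m =>
          rw [part2 D F' hF' f m]
          show _ = Phi A M N D (f ⊗ₜ[ℤ] m)
          rw [Phi_tmul]
      | add x y hx hy =>
          simp only [Submodule.Quotient.mk_add, map_add, hx, hy]
  · intro F
    refine ⟨((F ∘ₗ (Vk A M k).mkQ).restrictScalars ℤ) ∘ₗ TensorProduct.mk ℤ A M 1,
      fun m => rfl, ?_⟩
    apply isDiffOp_of_vanish
    intro l g m hl
    simp only [LinearMap.comp_apply, Submodule.mkQ_apply]
    have hx : iterDelta A M l (g ⊗ₜ[ℤ] m) ∈ Vk A M k :=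
      Submodule.subset_span ⟨l, g, m, hl, rfl⟩
    rw [(Submodule.Quotient.mk_eq_zero _).2 hx, map_zero]
end

section
/- Let A be a commutative ring and M an A-module. Define the geometrization Geo(M) := M / M^•, where M^• := ⋂_{q ≥ 1, 𝔪 maximal} 𝔪^q M, with the quotient map geo : M → Geo(M). Then Geo(M) is geometric (i.e. Geo(M)^• = 0), and Geo has the universal property: for any geometric A-module N and A-linear map φ : M → N, there exists a unique A-linear map φ̂ : Geo(M) → N with φ̂ ∘ geo = φ. -/
/-- `M^• := ⋂_{q ≥ 1} ⋂_{𝔪 maximal} 𝔪^q M`, the submodule of sections "vanishing at all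
points to all orders". -/
def bulletSub (A : Type*) [CommRing A] (M : Type*) [AddCommGroup M] [Module A M] :
    Submodule A M :=
  ⨅ (q : ℕ) (_ : 1 ≤ q) (I : Ideal A) (_ : I.IsMaximal), (I ^ q) • (⊤ : Submodule A M)

/-- An `A`-module is geometric if `M^• = 0`. -/
def IsGeometric (A : Type*) [CommRing A] (M : Type*) [AddCommGroup M] [Module A M] : Prop :=
  bulletSub A M = ⊥

/-- Geometrization `Geo(M) := M / M^•` is geometric, and it has the universal property:
every `A`-linear map from `M` into a geometric module factors uniquely through the
quotient map `geo : M → Geo(M)`. -/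
theorem geometrization (A : Type*) [CommRing A] (M : Type*) [AddCommGroup M] [Module A M] :
    IsGeometric A (M ⧸ bulletSub A M) ∧
    ∀ (N : Type*) [AddCommGroup N] [Module A N], IsGeometric A N →
      ∀ φ : M →ₗ[A] N, ∃! φhat : (M ⧸ bulletSub A M) →ₗ[A] N,
        φhat.comp (bulletSub A M).mkQ = φ := by
  constructor
  · rw [IsGeometric, eq_bot_iff]
    intro x hx
    obtain ⟨m, rfl⟩ := (bulletSub A M).mkQ_surjective x
    suffices hm : m ∈ bulletSub A M by
      simpa [Submodule.Quotient.mk_eq_zero] using hm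
    simp only [bulletSub, Submodule.mem_iInf] at hx ⊢
    intro q hq I hI
    have hx' : (bulletSub A M).mkQ m ∈ (I ^ q) • (⊤ : Submodule A (M ⧸ bulletSub A M)) := by
      have h0 : (bulletSub A M).mkQ m ∈ ⨅ (q : ℕ) (_ : 1 ≤ q) (I : Ideal A) (_ : I.IsMaximal),
          (I ^ q) • (⊤ : Submodule A (M ⧸ bulletSub A M)) := hx
      exact (Submodule.mem_iInf _).1 ((Submodule.mem_iInf _).1
        ((Submodule.mem_iInf _).1 ((Submodule.mem_iInf _).1 h0 q) hq) I) hI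
    have hmap : (I ^ q) • (⊤ : Submodule A (M ⧸ bulletSub A M)) =
        Submodule.map (bulletSub A M).mkQ ((I ^ q) • ⊤) := by
      rw [Submodule.map_smul'', Submodule.map_top, Submodule.range_mkQ]
    rw [hmap] at hx'
    obtain ⟨m', hm', hmm⟩ := hx'
    have hker : m - m' ∈ bulletSub A M := by
      rw [← Submodule.ker_mkQ (bulletSub A M), LinearMap.mem_ker, map_sub]
      exact sub_eq_zero_of_eq hmm.symm
    have hsub : m - m' ∈ (I ^ q) • (⊤ : Submodule A M) := by
      simp only [bulletSub, Submodule.mem_iInf] at hker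
      exact hker q hq I hI
    simpa using Submodule.add_mem _ hsub hm'
  · intro N _ _ hN φ
    have hle : bulletSub A M ≤ LinearMap.ker φ := by
      intro m hm
      rw [LinearMap.mem_ker]
      have hφm : φ m ∈ bulletSub A N := by
        simp only [bulletSub, Submodule.mem_iInf] at hm ⊢
        intro q hq I hI
        have h1 : φ m ∈ Submodule.map φ ((I ^ q) • (⊤ : Submodule A M)) :=
          ⟨m, hm q hq I hI, rfl⟩
        rw [Submodule.map_smul''] at h1
        exact smul_mono_right _ (le_top : Submodule.map φ ⊤ ≤ ⊤) h1
      rw [hN] at hφm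
      simpa using hφm
    refine ⟨(bulletSub A M).liftQ φ hle, (bulletSub A M).liftQ_mkQ φ hle, ?_⟩
    intro ψ hψ
    ext m
    simpa using congrArg (fun f => f m) hψ
end
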